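/- (Tightened sum-rate bound for Class III; proved in Section 5.4.) Let U, V1, V2, W, Y1, Y2 be random variables with values in finite sets. Define I1 = I(V1;Y1|U) − I(V1;Y2|U) + H(W|U,V1); I2 = I(V2;Y2|U) − I(V2;Y1|U) + H(W|U,V2); I1* = I(V1;Y1|U,V2) − I(V1;Y2|U,V2) + H(W|U,V1,V2); and I2* = I(V2;Y2|U,V1) − I(V2;Y1|U,V1) + H(W|U,V1,V2). Then min[ I1 + I2*, I2 + I1* ] ≤ I1 + I2; consequently, for rate pairs satisfying R1 ≤ min[I1, I1*] and R2 ≤ min[I2, I2*], the sum-rate bound R1 + R2 ≤ min[ I1 + I2*, I2 + I1* ] holds and is at least as tight as the bound R1 + R2 ≤ I1 + I2. -/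

import Mathlib

open scoped Classical BigOperators
open Real
set_option linter.unusedSectionVars false
set_option linter.unusedVariables false

noncomputable section

/-- `p` is a probability mass function on a finite type. -/
def IsPMF {α : Type*} [Fintype α] (p : α → ℝ) : Prop :=
  (∀ a, 0 ≤ p a) ∧ ∑ a, p a = 1

/-- Base-2 Shannon entropy of a pmf on a finite type. -/
def entPMF {α : Type*} [Fintype α] (p : α → ℝ) : ℝ :=
  ∑ a, -(p a * Real.logb 2 (p a))

/-- Distribution (pushforward pmf) of a random variable `X` under the pmf `p`. -/
def distRV {Ω α : Type*} [Fintype Ω] (p : Ω → ℝ) (X : Ω → α) : α → ℝ :=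
  fun a => ∑ ω, if X ω = a then p ω else 0

/-- Shannon entropy `H(X)` of a random variable (base 2). -/
def entRV {Ω α : Type*} [Fintype Ω] [Fintype α] (p : Ω → ℝ) (X : Ω → α) : ℝ :=
  entPMF (distRV p X)

/-- Conditional entropy `H(X|Y)` (base 2). -/
def condEnt {Ω α β : Type*} [Fintype Ω] [Fintype α] [Fintype β]
    (p : Ω → ℝ) (X : Ω → α) (Y : Ω → β) : ℝ :=
  entRV p (fun ω => (X ω, Y ω)) - entRV p Y

/-- Mutual information `I(X;Y)` (base 2). -/
def mutInfo {Ω α β : Type*} [Fintype Ω] [Fintype α] [Fintype β]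
    (p : Ω → ℝ) (X : Ω → α) (Y : Ω → β) : ℝ :=
  entRV p X + entRV p Y - entRV p (fun ω => (X ω, Y ω))

/-- Conditional mutual information `I(X;Y|Z)` (base 2). -/
def condMutInfo {Ω α β γ : Type*} [Fintype Ω] [Fintype α] [Fintype β] [Fintype γ]
    (p : Ω → ℝ) (X : Ω → α) (Y : Ω → β) (Z : Ω → γ) : ℝ :=
  entRV p (fun ω => (X ω, Z ω)) + entRV p (fun ω => (Y ω, Z ω))
    - entRV p (fun ω => (X ω, Y ω, Z ω)) - entRV p Z



lemma entRV_relabel {Ω α β : Type*} [Fintype Ω] [Fintype α] [Fintype β]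
    (p : Ω → ℝ) (f : α → β) (hf : Function.Injective f) (X : Ω → α) :
    entRV p (fun ω => f (X ω)) = entRV p X := by
  unfold entRV entPMF distRV
  rw [← Finset.sum_subset (Finset.subset_univ (Finset.univ.image f))]
  · rw [Finset.sum_image (fun a _ b _ h => hf h)]
    refine Finset.sum_congr rfl fun a _ => ?_
    have h : (∑ ω, if f (X ω) = f a then p ω else 0) = ∑ ω, if X ω = a then p ω else 0 :=
      Finset.sum_congr rfl fun ω _ => by simp [hf.eq_iff]
    simp only [h]
  · intro b _ hb
    have : (∑ ω, if f (X ω) = b then p ω else 0) = 0 := by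
      refine Finset.sum_eq_zero fun ω _ => ?_
      rw [if_neg]
      intro h
      exact hb (Finset.mem_image.2 ⟨X ω, Finset.mem_univ _, h⟩)
    simp [this]

variable {Ω α β γ : Type*} [Fintype Ω] [Fintype α] [Fintype β] [Fintype γ]

lemma distRV_nonneg (p : Ω → ℝ) (hp : ∀ ω, 0 ≤ p ω) (X : Ω → α) (a : α) :
    0 ≤ distRV p X a :=
  Finset.sum_nonneg fun ω _ => by split; exacts [hp ω, le_rfl]

lemma sum_distRV (p : Ω → ℝ) (X : Ω → α) : ∑ a, distRV p X a = ∑ ω, p ω := by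
  unfold distRV
  rw [Finset.sum_comm]
  exact Finset.sum_congr rfl fun ω _ => by simp

lemma distRV_comp (p : Ω → ℝ) (X : Ω → α) (f : α → β) :
    distRV p (fun ω => f (X ω)) = distRV (distRV p X) f := by
  funext b
  unfold distRV
  calc ∑ ω, (if f (X ω) = b then p ω else 0)
      = ∑ ω, ∑ a, (if X ω = a ∧ f a = b then p ω else 0) := by
        refine Finset.sum_congr rfl fun ω _ => ?_
        simp [ite_and, Finset.sum_ite_eq, Finset.sum_ite_eq']
    _ = ∑ a, ∑ ω, (if X ω = a ∧ f a = b then p ω else 0) := Finset.sum_comm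
    _ = ∑ a, (if f a = b then ∑ ω, (if X ω = a then p ω else 0) else 0) := by
        refine Finset.sum_congr rfl fun a _ => ?_
        by_cases h : f a = b <;> simp [h]

lemma sum_comp (p : Ω → ℝ) (X : Ω → α) (g : α → ℝ) :
    ∑ ω, p ω * g (X ω) = ∑ a, distRV p X a * g a := by
  unfold distRV
  calc ∑ ω, p ω * g (X ω)
      = ∑ ω, ∑ a, (if X ω = a then p ω * g a else 0) := by
        refine Finset.sum_congr rfl fun ω _ => ?_
        simp [Finset.sum_ite_eq, Finset.sum_ite_eq']
    _ = ∑ a, ∑ ω, (if X ω = a then p ω * g a else 0) := Finset.sum_comm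
    _ = ∑ a, (∑ ω, (if X ω = a then p ω else 0)) * g a := by
        refine Finset.sum_congr rfl fun a _ => ?_
        rw [Finset.sum_mul]
        refine Finset.sum_congr rfl fun ω _ => ?_
        split <;> simp

lemma le_distRV_self (p : Ω → ℝ) (hp : ∀ ω, 0 ≤ p ω) (X : Ω → α) (ω : Ω) :
    p ω ≤ distRV p X (X ω) := by
  have h := Finset.single_le_sum (f := fun ω' => if X ω' = X ω then p ω' else 0)
    (fun i _ => by split; exacts [hp i, le_rfl]) (Finset.mem_univ ω)
  simpa [distRV] using h

lemma sum_distRV_fst (p : Ω → ℝ) (X : Ω → α) (Z : Ω → γ) (c : γ) :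
    ∑ a, distRV p (fun ω => (X ω, Z ω)) (a, c) = distRV p Z c := by
  unfold distRV
  rw [Finset.sum_comm]
  refine Finset.sum_congr rfl fun ω _ => ?_
  simp [Prod.ext_iff, ite_and]

lemma submod_core (q : α × β × γ → ℝ) (hq0 : ∀ x, 0 ≤ q x) (hq1 : ∑ x, q x = 1) :
    entPMF q + entPMF (distRV q (fun x => x.2.2))
      ≤ entPMF (distRV q (fun x => (x.1, x.2.2)))
        + entPMF (distRV q (fun x => (x.2.1, x.2.2))) := by
  set qAC := distRV q (fun x : α × β × γ => (x.1, x.2.2)) with hqAC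
  set qBC := distRV q (fun x : α × β × γ => (x.2.1, x.2.2)) with hqBC
  set qC := distRV q (fun x : α × β × γ => x.2.2) with hqCdef
  have hAC0 : ∀ y, 0 ≤ qAC y := distRV_nonneg q hq0 _
  have hBC0 : ∀ y, 0 ≤ qBC y := distRV_nonneg q hq0 _
  have hC0 : ∀ c, 0 ≤ qC c := distRV_nonneg q hq0 _
  have hL : (0:ℝ) < Real.log 2 := Real.log_pos one_lt_two
  set t : α × β × γ → ℝ := fun x => q x * (Real.logb 2 (q x) + Real.logb 2 (qC x.2.2)
    - Real.logb 2 (qAC (x.1, x.2.2)) - Real.logb 2 (qBC (x.2.1, x.2.2))) with ht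
  have hA := sum_comp q (fun x : α×β×γ => (x.1, x.2.2)) (fun y => Real.logb 2 (qAC y))
  have hB := sum_comp q (fun x : α×β×γ => (x.2.1, x.2.2)) (fun y => Real.logb 2 (qBC y))
  have hCm := sum_comp q (fun x : α×β×γ => x.2.2) (fun c => Real.logb 2 (qC c))
  have hsplit : ∑ x, t x
      = (∑ x, q x * Real.logb 2 (q x)) + (∑ x, q x * Real.logb 2 (qC x.2.2))
        - (∑ x, q x * Real.logb 2 (qAC (x.1, x.2.2)))
        - (∑ x, q x * Real.logb 2 (qBC (x.2.1, x.2.2))) := by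
    simp only [ht, mul_add, mul_sub]
    rw [Finset.sum_sub_distrib, Finset.sum_sub_distrib, Finset.sum_add_distrib]
  have hrw : entPMF qAC + entPMF qBC - entPMF q - entPMF qC = ∑ x, t x := by
    unfold entPMF
    rw [hsplit, hA, hB, hCm]
    simp only [Finset.sum_neg_distrib]
    ring
  set s : α × β × γ → ℝ := fun x => if 0 < qC x.2.2
      then qAC (x.1, x.2.2) * qBC (x.2.1, x.2.2) / qC x.2.2 else 0 with hs
  have hpt : ∀ x, (q x - s x) / Real.log 2 ≤ t x := by
    intro x
    rcases eq_or_lt_of_le (hq0 x) with h0 | h0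
    · have ht0 : t x = 0 := by simp [ht, ← h0]
      have hs0 : 0 ≤ s x := by
        simp only [hs]
        split
        · exact div_nonneg (mul_nonneg (hAC0 _) (hBC0 _)) (le_of_lt (by assumption))
        · exact le_rfl
      rw [ht0]
      apply div_nonpos_of_nonpos_of_nonneg _ hL.le
      rw [← h0]
      linarith
    · have hac : 0 < qAC (x.1, x.2.2) :=
        lt_of_lt_of_le h0 (le_distRV_self q hq0 (fun x : α×β×γ => (x.1, x.2.2)) x)
      have hbc : 0 < qBC (x.2.1, x.2.2) :=
        lt_of_lt_of_le h0 (le_distRV_self q hq0 (fun x : α×β×γ => (x.2.1, x.2.2)) x)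
      have hc : 0 < qC x.2.2 :=
        lt_of_lt_of_le h0 (le_distRV_self q hq0 (fun x : α×β×γ => x.2.2) x)
      have hsx : s x = qAC (x.1, x.2.2) * qBC (x.2.1, x.2.2) / qC x.2.2 := by
        simp only [hs]; rw [if_pos hc]
      set u := qAC (x.1, x.2.2) * qBC (x.2.1, x.2.2) / (q x * qC x.2.2) with hu
      have hu0 : 0 < u := by
        apply div_pos (mul_pos hac hbc) (mul_pos h0 hc)
      have hlog : Real.logb 2 (q x) + Real.logb 2 (qC x.2.2)
          - Real.logb 2 (qAC (x.1, x.2.2)) - Real.logb 2 (qBC (x.2.1, x.2.2))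
          = -Real.logb 2 u := by
        rw [hu, Real.logb_div (ne_of_gt (mul_pos hac hbc)) (ne_of_gt (mul_pos h0 hc)),
          Real.logb_mul (ne_of_gt hac) (ne_of_gt hbc),
          Real.logb_mul (ne_of_gt h0) (ne_of_gt hc)]
        ring
      have htx : t x = -(q x * Real.logb 2 u) := by
        simp only [ht]
        rw [hlog]
        ring
      have hle : Real.logb 2 u ≤ (u - 1) / Real.log 2 := by
        rw [Real.logb]
        exact div_le_div_of_nonneg_right (Real.log_le_sub_one_of_pos hu0) hL.le
      have h1 : q x * Real.logb 2 u ≤ q x * ((u - 1) / Real.log 2) :=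
        mul_le_mul_of_nonneg_left hle (hq0 x)
      have hqu : q x * u = s x := by
        rw [hu, hsx]
        field_simp
      have h2 : (q x - s x) / Real.log 2 = -(q x * ((u - 1) / Real.log 2)) := by
        rw [← hqu]
        field_simp
        ring
      rw [htx, h2]
      linarith
  have hsum_s : ∑ x, s x ≤ 1 := by
    have h1 : ∑ x : α × β × γ, s x = ∑ y : γ × α × β, s (y.2.1, y.2.2, y.1) :=
      (Fintype.sum_equiv ⟨fun y : γ×α×β => (y.2.1, y.2.2, y.1),
        fun x : α×β×γ => (x.2.2, x.1, x.2.1),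
        fun ⟨c,a,b⟩ => rfl, fun ⟨a,b,c⟩ => rfl⟩
        (fun y : γ×α×β => s (y.2.1, y.2.2, y.1)) s (fun y => rfl)).symm
    rw [h1]
    simp only [Fintype.sum_prod_type]
    have h2 : ∀ c, (∑ a, ∑ b, s (a, b, c)) ≤ qC c := by
      intro c
      by_cases hc : 0 < qC c
      · have hval : ∀ a b, s (a, b, c) = qAC (a, c) * qBC (b, c) / qC c := by
          intro a b
          simp only [hs]
          rw [if_pos hc]
        have h3 : ∑ a, ∑ b, s (a, b, c)
            = (∑ a, qAC (a, c)) * (∑ b, qBC (b, c)) / qC c := by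
          rw [Finset.sum_mul_sum, Finset.sum_div]
          refine Finset.sum_congr rfl fun a _ => ?_
          rw [Finset.sum_div]
          exact Finset.sum_congr rfl fun b _ => (hval a b)
        rw [h3, sum_distRV_fst q (fun x : α×β×γ => x.1) (fun x : α×β×γ => x.2.2) c,
          sum_distRV_fst q (fun x : α×β×γ => x.2.1) (fun x : α×β×γ => x.2.2) c]
        rw [mul_div_assoc, div_self (ne_of_gt hc), mul_one]
      · have : ∀ a b, s (a, b, c) = 0 := by
          intro a b
          simp only [hs]
          rw [if_neg hc]
        simp only [this, Finset.sum_const_zero]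
        exact hC0 c
    calc ∑ c, ∑ a, ∑ b, s (a, b, c) ≤ ∑ c, qC c := Finset.sum_le_sum fun c _ => h2 c
      _ = 1 := by rw [hqCdef, sum_distRV, hq1]
  have hsum_t : 0 ≤ ∑ x, t x := by
    have h2 : ∑ x, (q x - s x) / Real.log 2 ≤ ∑ x, t x :=
      Finset.sum_le_sum fun x _ => hpt x
    have h3 : ∑ x, (q x - s x) / Real.log 2 = (1 - ∑ x, s x) / Real.log 2 := by
      rw [← Finset.sum_div, Finset.sum_sub_distrib, hq1]
    rw [h3] at h2
    have h4 : (0:ℝ) ≤ (1 - ∑ x, s x) / Real.log 2 :=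
      div_nonneg (by linarith) hL.le
    linarith
  linarith

lemma condMutInfo_nonneg (p : Ω → ℝ) (hp : IsPMF p)
    (X : Ω → α) (Y : Ω → β) (Z : Ω → γ) : 0 ≤ condMutInfo p X Y Z := by
  set q := distRV p (fun ω => (X ω, Y ω, Z ω)) with hq
  have hq0 : ∀ x, 0 ≤ q x := distRV_nonneg p hp.1 _
  have hq1 : ∑ x, q x = 1 := by rw [hq, sum_distRV, hp.2]
  have key := submod_core q hq0 hq1
  have e1 : entRV p (fun ω => (X ω, Z ω))
      = entPMF (distRV q (fun x : α × β × γ => (x.1, x.2.2))) :=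
    congrArg entPMF (distRV_comp p (fun ω => (X ω, Y ω, Z ω))
      (fun x : α × β × γ => (x.1, x.2.2)))
  have e2 : entRV p (fun ω => (Y ω, Z ω))
      = entPMF (distRV q (fun x : α × β × γ => (x.2.1, x.2.2))) :=
    congrArg entPMF (distRV_comp p (fun ω => (X ω, Y ω, Z ω))
      (fun x : α × β × γ => (x.2.1, x.2.2)))
  have e3 : entRV p Z = entPMF (distRV q (fun x : α × β × γ => x.2.2)) :=
    congrArg entPMF (distRV_comp p (fun ω => (X ω, Y ω, Z ω))
      (fun x : α × β × γ => x.2.2))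
  have e4 : entRV p (fun ω => (X ω, Y ω, Z ω)) = entPMF q := rfl
  simp only [condMutInfo]
  linarith [key, e1, e2, e3, e4]

lemma entRV_pair_comm (p : Ω → ℝ) (A : Ω → α) (B : Ω → β) :
    entRV p (fun ω => (A ω, B ω)) = entRV p (fun ω => (B ω, A ω)) :=
  entRV_relabel p (fun x : β × α => (x.2, x.1))
    (Function.LeftInverse.injective (g := fun x : α × β => (x.2, x.1))
      (fun ⟨b, a⟩ => rfl)) (fun ω => (B ω, A ω))

lemma chain_rule_symm {δ υ : Type*} [Fintype δ] [Fintype υ]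
    (p : Ω → ℝ) (A : Ω → α) (B : Ω → β) (Y : Ω → δ) (U : Ω → υ) :
    condMutInfo p A Y U + condMutInfo p B Y (fun ω => (U ω, A ω))
      = condMutInfo p B Y U + condMutInfo p A Y (fun ω => (U ω, B ω)) := by
  have e1 : entRV p (fun ω => (Y ω, U ω, A ω)) = entRV p (fun ω => (A ω, Y ω, U ω)) :=
    entRV_relabel p (fun x : α × δ × υ => (x.2.1, x.2.2, x.1))
      (Function.LeftInverse.injective (g := fun x : δ × υ × α => (x.2.2, x.1, x.2.1))
        (fun ⟨a, y, u⟩ => rfl)) (fun ω => (A ω, Y ω, U ω))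
  have e2 : entRV p (fun ω => (A ω, U ω)) = entRV p (fun ω => (U ω, A ω)) :=
    entRV_pair_comm p A U
  have e3 : entRV p (fun ω => (B ω, U ω, A ω)) = entRV p (fun ω => (A ω, U ω, B ω)) :=
    entRV_relabel p (fun x : α × υ × β => (x.2.2, x.2.1, x.1))
      (Function.LeftInverse.injective (g := fun x : β × υ × α => (x.2.2, x.2.1, x.1))
        (fun ⟨a, u, b⟩ => rfl)) (fun ω => (A ω, U ω, B ω))
  have e4 : entRV p (fun ω => (B ω, Y ω, U ω, A ω))
      = entRV p (fun ω => (A ω, Y ω, U ω, B ω)) :=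
    entRV_relabel p (fun x : α × δ × υ × β => (x.2.2.2, x.2.1, x.2.2.1, x.1))
      (Function.LeftInverse.injective (g := fun x : β × δ × υ × α => (x.2.2.2, x.2.1, x.2.2.1, x.1))
        (fun ⟨a, y, u, b⟩ => rfl)) (fun ω => (A ω, Y ω, U ω, B ω))
  have e5 : entRV p (fun ω => (Y ω, U ω, B ω)) = entRV p (fun ω => (B ω, Y ω, U ω)) :=
    entRV_relabel p (fun x : β × δ × υ => (x.2.1, x.2.2, x.1))
      (Function.LeftInverse.injective (g := fun x : δ × υ × β => (x.2.2, x.1, x.2.1))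
        (fun ⟨b, y, u⟩ => rfl)) (fun ω => (B ω, Y ω, U ω))
  have e6 : entRV p (fun ω => (B ω, U ω)) = entRV p (fun ω => (U ω, B ω)) :=
    entRV_pair_comm p B U
  simp only [condMutInfo]
  linarith [e1, e2, e3, e4, e5, e6]

lemma condEnt_triple_le_left {𝒲 υ ν1 ν2 : Type*}
    [Fintype 𝒲] [Fintype υ] [Fintype ν1] [Fintype ν2]
    (p : Ω → ℝ) (hp : IsPMF p) (W : Ω → 𝒲) (U : Ω → υ) (V1 : Ω → ν1) (V2 : Ω → ν2) :
    condEnt p W (fun ω => (U ω, V1 ω, V2 ω)) ≤ condEnt p W (fun ω => (U ω, V1 ω)) := by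
  have h := condMutInfo_nonneg p hp W V2 (fun ω => (U ω, V1 ω))
  have e1 : entRV p (fun ω => (V2 ω, U ω, V1 ω)) = entRV p (fun ω => (U ω, V1 ω, V2 ω)) :=
    entRV_relabel p (fun x : υ × ν1 × ν2 => (x.2.2, x.1, x.2.1))
      (Function.LeftInverse.injective (g := fun x : ν2 × υ × ν1 => (x.2.1, x.2.2, x.1))
        (fun ⟨u, v1, v2⟩ => rfl)) (fun ω => (U ω, V1 ω, V2 ω))
  have e2 : entRV p (fun ω => (W ω, V2 ω, U ω, V1 ω))
      = entRV p (fun ω => (W ω, U ω, V1 ω, V2 ω)) :=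
    entRV_relabel p (fun x : 𝒲 × υ × ν1 × ν2 => (x.1, x.2.2.2, x.2.1, x.2.2.1))
      (Function.LeftInverse.injective
        (g := fun x : 𝒲 × ν2 × υ × ν1 => (x.1, x.2.2.1, x.2.2.2, x.2.1))
        (fun ⟨w, u, v1, v2⟩ => rfl)) (fun ω => (W ω, U ω, V1 ω, V2 ω))
  simp only [condMutInfo, condEnt] at h ⊢
  linarith [e1, e2, h]

lemma condEnt_triple_le_right {𝒲 υ ν1 ν2 : Type*}
    [Fintype 𝒲] [Fintype υ] [Fintype ν1] [Fintype ν2]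
    (p : Ω → ℝ) (hp : IsPMF p) (W : Ω → 𝒲) (U : Ω → υ) (V1 : Ω → ν1) (V2 : Ω → ν2) :
    condEnt p W (fun ω => (U ω, V1 ω, V2 ω)) ≤ condEnt p W (fun ω => (U ω, V2 ω)) := by
  have h := condMutInfo_nonneg p hp W V1 (fun ω => (U ω, V2 ω))
  have e1 : entRV p (fun ω => (V1 ω, U ω, V2 ω)) = entRV p (fun ω => (U ω, V1 ω, V2 ω)) :=
    entRV_relabel p (fun x : υ × ν1 × ν2 => (x.2.1, x.1, x.2.2))
      (Function.LeftInverse.injective (g := fun x : ν1 × υ × ν2 => (x.2.1, x.1, x.2.2))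
        (fun ⟨u, v1, v2⟩ => rfl)) (fun ω => (U ω, V1 ω, V2 ω))
  have e2 : entRV p (fun ω => (W ω, V1 ω, U ω, V2 ω))
      = entRV p (fun ω => (W ω, U ω, V1 ω, V2 ω)) :=
    entRV_relabel p (fun x : 𝒲 × υ × ν1 × ν2 => (x.1, x.2.2.1, x.2.1, x.2.2.2))
      (Function.LeftInverse.injective
        (g := fun x : 𝒲 × ν1 × υ × ν2 => (x.1, x.2.2.1, x.2.1, x.2.2.2))
        (fun ⟨w, u, v1, v2⟩ => rfl)) (fun ω => (W ω, U ω, V1 ω, V2 ω))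
  simp only [condMutInfo, condEnt] at h ⊢
  linarith [e1, e2, h]

/-- **Tightened sum-rate bound for Class III (Section 5.4).**
With `I1 = I(V1;Y1|U) − I(V1;Y2|U) + H(W|U,V1)`,
`I2 = I(V2;Y2|U) − I(V2;Y1|U) + H(W|U,V2)`,
`I1* = I(V1;Y1|U,V2) − I(V1;Y2|U,V2) + H(W|U,V1,V2)` and
`I2* = I(V2;Y2|U,V1) − I(V2;Y1|U,V1) + H(W|U,V1,V2)`, one has
`min[I1 + I2*, I2 + I1*] ≤ I1 + I2`; consequently any rate pair with
`R1 ≤ min[I1, I1*]` and `R2 ≤ min[I2, I2*]` satisfies the sum-rate bound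
`R1 + R2 ≤ min[I1 + I2*, I2 + I1*]`, which is at least as tight as
`R1 + R2 ≤ I1 + I2`. -/
theorem classIII_tightened_sumrate {Ω 𝒰 𝒱1 𝒱2 𝒲 𝒴1 𝒴2 : Type}
    [Fintype Ω] [Fintype 𝒰] [Fintype 𝒱1] [Fintype 𝒱2] [Fintype 𝒲]
    [Fintype 𝒴1] [Fintype 𝒴2]
    (p : Ω → ℝ) (hp : IsPMF p)
    (U : Ω → 𝒰) (V1 : Ω → 𝒱1) (V2 : Ω → 𝒱2) (W : Ω → 𝒲)
    (Y1 : Ω → 𝒴1) (Y2 : Ω → 𝒴2) :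
    (min
        ((condMutInfo p V1 Y1 U - condMutInfo p V1 Y2 U
            + condEnt p W (fun ω => (U ω, V1 ω)))
          + (condMutInfo p V2 Y2 (fun ω => (U ω, V1 ω))
            - condMutInfo p V2 Y1 (fun ω => (U ω, V1 ω))
            + condEnt p W (fun ω => (U ω, V1 ω, V2 ω))))
        ((condMutInfo p V2 Y2 U - condMutInfo p V2 Y1 U
            + condEnt p W (fun ω => (U ω, V2 ω)))
          + (condMutInfo p V1 Y1 (fun ω => (U ω, V2 ω))
            - condMutInfo p V1 Y2 (fun ω => (U ω, V2 ω))
            + condEnt p W (fun ω => (U ω, V1 ω, V2 ω))))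
      ≤ (condMutInfo p V1 Y1 U - condMutInfo p V1 Y2 U
          + condEnt p W (fun ω => (U ω, V1 ω)))
        + (condMutInfo p V2 Y2 U - condMutInfo p V2 Y1 U
          + condEnt p W (fun ω => (U ω, V2 ω))))
    ∧ ∀ R1 R2 : ℝ,
      R1 ≤ min
          (condMutInfo p V1 Y1 U - condMutInfo p V1 Y2 U
            + condEnt p W (fun ω => (U ω, V1 ω)))
          (condMutInfo p V1 Y1 (fun ω => (U ω, V2 ω))
            - condMutInfo p V1 Y2 (fun ω => (U ω, V2 ω))
            + condEnt p W (fun ω => (U ω, V1 ω, V2 ω))) →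
      R2 ≤ min
          (condMutInfo p V2 Y2 U - condMutInfo p V2 Y1 U
            + condEnt p W (fun ω => (U ω, V2 ω)))
          (condMutInfo p V2 Y2 (fun ω => (U ω, V1 ω))
            - condMutInfo p V2 Y1 (fun ω => (U ω, V1 ω))
            + condEnt p W (fun ω => (U ω, V1 ω, V2 ω))) →
      R1 + R2 ≤ min
          ((condMutInfo p V1 Y1 U - condMutInfo p V1 Y2 U
              + condEnt p W (fun ω => (U ω, V1 ω)))
            + (condMutInfo p V2 Y2 (fun ω => (U ω, V1 ω))
              - condMutInfo p V2 Y1 (fun ω => (U ω, V1 ω))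
              + condEnt p W (fun ω => (U ω, V1 ω, V2 ω))))
          ((condMutInfo p V2 Y2 U - condMutInfo p V2 Y1 U
              + condEnt p W (fun ω => (U ω, V2 ω)))
            + (condMutInfo p V1 Y1 (fun ω => (U ω, V2 ω))
              - condMutInfo p V1 Y2 (fun ω => (U ω, V2 ω))
              + condEnt p W (fun ω => (U ω, V1 ω, V2 ω)))) := by
  have hch1 := chain_rule_symm p V1 V2 Y1 U
  have hch2 := chain_rule_symm p V1 V2 Y2 U
  have hE1 := condEnt_triple_le_left p hp W U V1 V2
  have hE2 := condEnt_triple_le_right p hp W U V1 V2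
  constructor
  · rcases le_total
      ((condMutInfo p V1 Y1 U - condMutInfo p V1 Y2 U
          + condEnt p W (fun ω => (U ω, V1 ω)))
        + (condMutInfo p V2 Y2 (fun ω => (U ω, V1 ω))
          - condMutInfo p V2 Y1 (fun ω => (U ω, V1 ω))
          + condEnt p W (fun ω => (U ω, V1 ω, V2 ω))))
      ((condMutInfo p V2 Y2 U - condMutInfo p V2 Y1 U
          + condEnt p W (fun ω => (U ω, V2 ω)))
        + (condMutInfo p V1 Y1 (fun ω => (U ω, V2 ω))
          - condMutInfo p V1 Y2 (fun ω => (U ω, V2 ω))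
          + condEnt p W (fun ω => (U ω, V1 ω, V2 ω)))) with h | h
    · rw [min_eq_left h]
      linarith [hch1, hch2, hE1, hE2, h]
    · rw [min_eq_right h]
      linarith [hch1, hch2, hE1, hE2, h]
  · intro R1 R2 h1 h2
    refine le_min ?_ ?_
    · have a1 := h1.trans (min_le_left _ _)
      have a2 := h2.trans (min_le_right _ _)
      linarith
    · have a1 := h1.trans (min_le_right _ _)
      have a2 := h2.trans (min_le_left _ _)
      linarith
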